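/- Characterisation of infinitesimal automorphisms of the disc: let η : ℂ → ℂ be continuous on the closed unit disc 𝔻 and holomorphic on the open unit disc. Then η satisfies the totally real boundary condition η(z) ∈ ℝ·(iz) for every z with |z| = 1 (i.e. η(z) is a real multiple of iz on the unit circle) if and only if there exist a ∈ ℂ and b ∈ ℝ such that η(z) = a + i b z − conj(a)·z² for all z ∈ 𝔻. In particular, the space of such η is a 3-dimensional real vector space (the Lie algebra of infinitesimal holomorphic automorphisms of 𝔻). -/

import Mathlib

open Metric Complex

noncomputable def Bint (η : ℂ → ℂ) (n : ℤ) : ℂ :=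
  ∫ θ in (0:ℝ)..(2*Real.pi), η (circleMap 0 1 θ) * (circleMap 0 1 θ) ^ n

lemma circleMap_mem' (θ : ℝ) : circleMap 0 1 θ ∈ closedBall (0:ℂ) 1 :=
  circleMap_mem_closedBall 0 zero_le_one θ

lemma circleMap_ne' (θ : ℝ) : circleMap 0 1 θ ≠ 0 :=
  circleMap_ne_center one_ne_zero

lemma cont_integrand (η : ℂ → ℂ) (hcont : ContinuousOn η (closedBall (0 : ℂ) 1)) (n : ℤ) :
    Continuous (fun θ : ℝ => η (circleMap 0 1 θ) * (circleMap 0 1 θ) ^ n) := by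
  refine Continuous.mul ?_ ?_
  · exact hcont.comp_continuous (continuous_circleMap 0 1) circleMap_mem'
  · exact Continuous.zpow₀ (continuous_circleMap 0 1) n (fun θ => Or.inl (circleMap_ne' θ))

lemma Bint_pos_zero (η : ℂ → ℂ)
    (hcont : ContinuousOn η (closedBall (0 : ℂ) 1))
    (hhol : DifferentiableOn ℂ η (ball (0 : ℂ) 1)) (n : ℕ) :
    Bint η ((n : ℤ) + 1) = 0 := by
  have h := circleIntegral_eq_zero_of_differentiable_on_off_countable
    (f := fun z => η z * z ^ n) (c := 0) (R := 1) zero_le_one Set.countable_empty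
    (hcont.mul (continuousOn_pow n)) ?_
  · have h2 : (∮ z in C(0, 1), η z * z ^ n)
        = Complex.I * ∫ θ in (0:ℝ)..(2*Real.pi), η (circleMap 0 1 θ) * (circleMap 0 1 θ) ^ ((n:ℤ)+1) := by
      rw [← intervalIntegral.integral_const_mul]
      simp only [circleIntegral, deriv_circleMap, smul_eq_mul]
      refine intervalIntegral.integral_congr (fun θ _ => ?_)
      rw [zpow_add₀ (circleMap_ne' θ), zpow_natCast, zpow_one]
      ring
    rw [h2] at h
    have := mul_eq_zero.mp h
    simpa [Complex.I_ne_zero, Bint] using this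
  · intro z hz
    exact ((hhol.differentiableAt (isOpen_ball.mem_nhds hz.1)).mul (differentiableAt_pow n))

lemma key_pointwise (η : ℂ → ℂ)
    (hb : ∀ z : ℂ, ‖z‖ = 1 → ∃ r : ℝ, η z = (r : ℂ) * (Complex.I * z))
    (m : ℤ) (θ : ℝ) :
    η (circleMap 0 1 θ) * (circleMap 0 1 θ) ^ (-m - 2)
      + (starRingEnd ℂ) (η (circleMap 0 1 θ) * (circleMap 0 1 θ) ^ m) = 0 := by
  set z := circleMap 0 1 θ with hzdef
  have habs : ‖z‖ = 1 := by simp [hzdef, circleMap]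
  obtain ⟨r, hr⟩ := hb z habs
  have hz0 : z ≠ 0 := circleMap_ne' θ
  have hzinv : (starRingEnd ℂ) z = z⁻¹ := by
    refine eq_inv_of_mul_eq_one_left ?_
    rw [mul_comm, Complex.mul_conj]
    norm_cast
    rw [Complex.normSq_eq_norm_sq, habs]; norm_num
  rw [hr]
  simp only [map_mul, map_zpow₀, Complex.conj_I, Complex.conj_ofReal, hzinv, inv_zpow, ← zpow_neg]
  have e1 : z * z ^ (-m - 2) = z ^ (-m - 1) := by
    rw [mul_comm, ← zpow_add_one₀ hz0]
    ring_nf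
  have e2 : z⁻¹ * z ^ (-m) = z ^ (-m - 1) := by
    rw [mul_comm, ← zpow_sub_one₀ hz0]
  linear_combination (r : ℂ) * Complex.I * e1 - (r : ℂ) * Complex.I * e2

lemma Bint_rel (η : ℂ → ℂ)
    (hcont : ContinuousOn η (closedBall (0 : ℂ) 1))
    (hb : ∀ z : ℂ, ‖z‖ = 1 → ∃ r : ℝ, η z = (r : ℂ) * (Complex.I * z))
    (m : ℤ) : Bint η (-m - 2) = -(starRingEnd ℂ) (Bint η m) := by
  have cint : Continuous fun θ : ℝ => (starRingEnd ℂ) (η (circleMap 0 1 θ) * circleMap 0 1 θ ^ m) :=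
    Complex.continuous_conj.comp (cont_integrand η hcont m)
  have hconj : (starRingEnd ℂ) (Bint η m)
      = ∫ θ in (0:ℝ)..(2*Real.pi), (starRingEnd ℂ) (η (circleMap 0 1 θ) * (circleMap 0 1 θ) ^ m) := by
    exact (Complex.conjCLE.toContinuousLinearMap.intervalIntegral_comp_comm
      ((cont_integrand η hcont m).intervalIntegrable _ _)).symm
  have hsum : Bint η (-m - 2) + (starRingEnd ℂ) (Bint η m) = 0 := by
    rw [hconj, Bint, ← intervalIntegral.integral_add
      ((cont_integrand η hcont (-m-2)).intervalIntegrable _ _)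
      (cint.intervalIntegrable _ _)]
    rw [intervalIntegral.integral_congr (g := fun _ => (0:ℂ)) (fun θ _ => key_pointwise η hb m θ)]
    simp
  exact eq_neg_of_add_eq_zero_left hsum

lemma coeff_eq (η : ℂ → ℂ) (n : ℕ) :
    (cauchyPowerSeries η 0 1 n fun _ => (1:ℂ)) = Bint η (-(n:ℤ)) / (2 * (Real.pi : ℂ)) := by
  rw [cauchyPowerSeries_apply]
  have h : (∮ z in C(0,(1:ℝ)), ((1:ℂ)/(z-0))^n • (z-0)⁻¹ • η z) = Complex.I * Bint η (-(n:ℤ)) := by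
    rw [Bint, ← intervalIntegral.integral_const_mul]
    simp only [circleIntegral, deriv_circleMap, smul_eq_mul, sub_zero]
    refine intervalIntegral.integral_congr fun θ _ => ?_
    have hz0 := circleMap_ne' θ
    rw [zpow_neg, zpow_natCast]
    field_simp
    ring_nf
    rw [← mul_pow, mul_inv_cancel₀ hz0, one_pow, one_mul]
  rw [h, smul_eq_mul]
  have hpi : (Real.pi : ℂ) ≠ 0 := by
    exact_mod_cast Real.pi_ne_zero
  field_simp [Complex.I_ne_zero]

/-- Characterisation of infinitesimal automorphisms of the disc: a function `η`
continuous on the closed unit disc and holomorphic on the open unit disc satisfies the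
totally real boundary condition `η(z) ∈ ℝ·(iz)` for `|z| = 1` if and only if it is of
the form `η(z) = a + i b z − ā z²` with `a ∈ ℂ`, `b ∈ ℝ`; these are precisely the
infinitesimal holomorphic automorphisms of the disc, forming a `3`-dimensional real
vector space. -/
theorem infinitesimal_automorphisms_of_disc (η : ℂ → ℂ)
    (hcont : ContinuousOn η (closedBall (0 : ℂ) 1))
    (hhol : DifferentiableOn ℂ η (ball (0 : ℂ) 1)) :
    (∀ z : ℂ, ‖z‖ = 1 → ∃ r : ℝ, η z = (r : ℂ) * (Complex.I * z)) ↔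
    (∃ (a : ℂ) (b : ℝ), ∀ z ∈ closedBall (0 : ℂ) 1,
      η z = a + Complex.I * (b : ℂ) * z - (starRingEnd ℂ) a * z ^ 2) := by
  constructor
  · intro hb
    set p := cauchyPowerSeries η 0 1 with hp
    have hps : HasFPowerSeriesOnBall η p 0 ((1 : NNReal) : ENNReal) := by
      refine Complex.hasFPowerSeriesOnBall_of_differentiable_off_countable (R := 1)
        Set.countable_empty (by simpa using hcont) ?_ one_pos
      intro z hz
      exact hhol.differentiableAt (isOpen_ball.mem_nhds (by simpa using hz.1))
    set c : ℕ → ℂ := fun n => p n fun _ => 1 with hcdef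
    have hc : ∀ n : ℕ, c n = Bint η (-(n:ℤ)) / (2 * (Real.pi : ℂ)) := fun n => coeff_eq η n
    have hpi : (Real.pi : ℂ) ≠ 0 := by exact_mod_cast Real.pi_ne_zero
    have hc3 : ∀ n : ℕ, 3 ≤ n → c n = 0 := by
      intro n hn
      obtain ⟨k, rfl⟩ : ∃ k, n = k + 3 := ⟨n - 3, by omega⟩
      have h1 : (-(↑(k+3):ℤ)) = -((k:ℤ)+1) - 2 := by push_cast; ring
      rw [hc, h1, Bint_rel η hcont hb, Bint_pos_zero η hcont hhol k]
      simp
    have hre1 : Bint η (-1) = -(starRingEnd ℂ) (Bint η (-1)) := by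
      have := Bint_rel η hcont hb (-1)
      simpa using this
    have hconj2pi : (starRingEnd ℂ) (2 * (Real.pi : ℂ)) = 2 * (Real.pi : ℂ) := by
      rw [map_mul, Complex.conj_ofReal, map_ofNat]
    have hc1 : c 1 = Complex.I * ((c 1).im : ℂ) := by
      have hre : (c 1).re = 0 := by
        have h2 : c 1 = -(starRingEnd ℂ) (c 1) := by
          rw [hc 1]
          rw [show (-(1:ℕ):ℤ) = (-1 : ℤ) from by norm_num]
          rw [map_div₀, hconj2pi]
          conv_lhs => rw [hre1]
          rw [neg_div]
        have := congrArg Complex.re h2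
        simp at this
        linarith
      conv_lhs => rw [← Complex.re_add_im (c 1)]
      rw [hre]
      simp [mul_comm]
    have hc2 : c 2 = -(starRingEnd ℂ) (c 0) := by
      have h0 := Bint_rel η hcont hb 0
      rw [hc 2, hc 0]
      rw [show (-(2:ℕ):ℤ) = -(0:ℤ) - 2 from by norm_num, h0,
        show (-(0:ℕ):ℤ) = (0:ℤ) from by norm_num]
      rw [map_div₀, hconj2pi, neg_div]
    have hsum : ∀ w ∈ ball (0:ℂ) 1, η w = c 0 + c 1 * w + c 2 * w^2 := by
      intro w hw
      have hw' : w ∈ Metric.eball (0:ℂ) ((1 : NNReal) : ENNReal) := by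
        rw [Metric.emetric_ball_nnreal]
        simpa using hw
      have HS := hps.hasSum hw'
      have happ : ∀ n : ℕ, (p n fun _ => w) = c n * w ^ n := by
        intro n
        simp only [hcdef, hp, cauchyPowerSeries, ContinuousMultilinearMap.mkPiRing_apply,
          Finset.prod_const, Finset.card_univ, Fintype.card_fin, smul_eq_mul, one_pow, one_mul]
        ring
      rw [zero_add] at HS
      have HS2 : HasSum (fun n : ℕ => c n * w ^ n) (η w) := by
        simpa only [happ] using HS
      have HS3 : HasSum (fun n : ℕ => c n * w ^ n) (∑ n ∈ Finset.range 3, c n * w ^ n) := by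
        refine hasSum_sum_of_ne_finset_zero ?_
        intro n hn
        rw [hc3 n (by simpa using hn)]
        ring
      have := HS2.unique HS3
      rw [this]
      simp [Finset.sum_range_succ]
    refine ⟨c 0, (c 1).im, ?_⟩
    have heq : Set.EqOn η
        (fun z => c 0 + Complex.I * (((c 1).im : ℝ) : ℂ) * z - (starRingEnd ℂ) (c 0) * z ^ 2)
        (ball (0:ℂ) 1) := by
      intro w hw
      rw [hsum w hw]
      simp only
      rw [← hc1, hc2]
      ring
    have hcont2 : ContinuousOn
        (fun z : ℂ => c 0 + Complex.I * (((c 1).im : ℝ) : ℂ) * z - (starRingEnd ℂ) (c 0) * z ^ 2)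
        (closedBall (0:ℂ) 1) := by
      refine Continuous.continuousOn ?_
      exact (continuous_const.add (continuous_const.mul continuous_id)).sub
        (continuous_const.mul (continuous_pow 2))
    exact fun z hz => heq.of_subset_closure hcont hcont2 ball_subset_closedBall
      (closure_ball (0:ℂ) one_ne_zero).ge hz
  · rintro ⟨a, b, h⟩
    intro z hz
    have hz1 : (starRingEnd ℂ) z * z = 1 := by
      rw [mul_comm, Complex.mul_conj]
      norm_cast
      rw [Complex.normSq_eq_norm_sq, hz]; norm_num
    have hmem : z ∈ closedBall (0 : ℂ) 1 := by
      simp [Complex.dist_eq, hz]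
    refine ⟨b + 2 * (a * (starRingEnd ℂ) z).im, ?_⟩
    rw [h z hmem]
    have him : ((a * (starRingEnd ℂ) z).im : ℂ)
        = (a * (starRingEnd ℂ) z - (starRingEnd ℂ) (a * (starRingEnd ℂ) z)) / (2 * Complex.I) := by
      rw [Complex.sub_conj]
      field_simp
      push_cast
      ring
    push_cast
    rw [him]
    simp only [map_mul, Complex.conj_conj]
    field_simp
    linear_combination (-a) * hz1
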